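/- The homomorphisms ψ : G_{n+1}^2 → G_{n,d}^2 (ψ(a_{ij}) = a_{ij} for i,j ≤ n, ψ(a_{i(n+1)}) = τ_i) and ω : G_{n,d}^2 → Q (ω(a_{ij}) = a_{ij}, ω(τ_i) = a_{i(n+1)}) induce mutually inverse isomorphisms; hence G_{n,d}^2 ≅ G_{n+1}^2 / ⟨⟨[a_{i(n+1)}, a_{j(n+1)}]⟩⟩. -/
import Mathlib

lemma mk_rel_one {α : Type*} {rels : Set (FreeGroup α)} {r : FreeGroup α} (h : r ∈ rels) :
    PresentedGroup.mk rels r = 1 :=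
  (QuotientGroup.eq_one_iff _).mpr (Subgroup.subset_normalClosure h)

lemma mk_of {α : Type*} {rels : Set (FreeGroup α)} (x : α) :
    PresentedGroup.mk rels (FreeGroup.of x) = PresentedGroup.of x := rfl

lemma le3 {α : Type*} [DecidableEq α] (x y z : α) : ({x, y, z} : Finset α).card ≤ 3 :=
  (Finset.card_insert_le _ _).trans (Nat.succ_le_succ ((Finset.card_insert_le _ _).trans
    (Nat.succ_le_succ (by simp))))

lemma card4_iff {α : Type*} [DecidableEq α] {a b c d : α} :
    ({a, b, c, d} : Finset α).card = 4 ↔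
      a ≠ b ∧ a ≠ c ∧ a ≠ d ∧ b ≠ c ∧ b ≠ d ∧ c ≠ d := by
  constructor
  · intro h
    refine ⟨fun he => ?_, fun he => ?_, fun he => ?_, fun he => ?_, fun he => ?_, fun he => ?_⟩ <;>
      subst he
    · rw [show ({a, a, c, d} : Finset α) = {a, c, d} by ext x; simp; try tauto] at h
      have := le3 a c d; omega
    · rw [show ({a, b, a, d} : Finset α) = {a, b, d} by ext x; simp; try tauto] at h
      have := le3 a b d; omega
    · rw [show ({a, b, c, a} : Finset α) = {a, b, c} by ext x; simp; try tauto] at h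
      have := le3 a b c; omega
    · rw [show ({a, b, b, d} : Finset α) = {a, b, d} by ext x; simp; try tauto] at h
      have := le3 a b d; omega
    · rw [show ({a, b, c, b} : Finset α) = {a, b, c} by ext x; simp; try tauto] at h
      have := le3 a b c; omega
    · rw [show ({a, b, c, c} : Finset α) = {a, b, c} by ext x; simp; try tauto] at h
      have := le3 a b c; omega
  · rintro ⟨h1, h2, h3, h4, h5, h6⟩
    rw [Finset.card_insert_of_notMem (by simp [h1, h2, h3]),
      Finset.card_insert_of_notMem (by simp [h4, h5]),
      Finset.card_insert_of_notMem (by simp [h6]), Finset.card_singleton]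

lemma image4 {α β : Type*} [DecidableEq α] [DecidableEq β] {f : α → β} (hf : Function.Injective f)
    (a b c d : α) : ({f a, f b, f c, f d} : Finset β).card = ({a, b, c, d} : Finset α).card := by
  rw [show ({f a, f b, f c, f d} : Finset β) = ({a, b, c, d} : Finset α).image f by
    simp [Finset.image_insert], Finset.card_image_of_injective _ hf]

-- pure group identities
lemma comm_of_rel6 {G : Type*} [Group G] {x s t : G} (h6 : s * t * x * t * s = x)
    (hs : s * s = 1) (ht : t * t = 1) : x * (s * t) = s * t * x := by
  have h2 : s * t * x * t * s * (s * t) = s * t * x := by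
    calc s * t * x * t * s * (s * t) = s * t * x * t * (s * s) * t := by group
      _ = s * t * x * (t * t) := by rw [hs]; group
      _ = s * t * x := by rw [ht]; group
  calc x * (s * t) = s * t * x * t * s * (s * t) := by rw [h6]
    _ = s * t * x := h2

lemma rel6_of_comm {G : Type*} [Group G] {x s t : G} (hc : x * (s * t) = s * t * x)
    (hs : s * s = 1) (ht : t * t = 1) : s * t * x * t * s = x := by
  calc s * t * x * t * s = x * (s * t) * t * s := by rw [← hc]
    _ = x * s * (t * t) * s := by group
    _ = x * (s * s) := by rw [ht]; group
    _ = x := by rw [hs, mul_one]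

lemma comm_of_triple {G : Type*} [Group G] {x s t : G} (h1 : x * s * t = t * s * x)
    (h2 : s * t = t * s) : x * (s * t) = s * t * x := by
  calc x * (s * t) = x * s * t := by group
    _ = t * s * x := h1
    _ = s * t * x := by rw [← h2]

lemma triple_of_comm {G : Type*} [Group G] {x s t : G} (hc : x * (s * t) = s * t * x)
    (h2 : s * t = t * s) : x * s * t = t * s * x := by
  calc x * s * t = x * (s * t) := by group
    _ = s * t * x := hc
    _ = t * s * x := by rw [h2]
abbrev GenG (n : ℕ) := {p : Fin n × Fin n // p.1 < p.2}

def relsG (n : ℕ) : Set (FreeGroup (GenG n)) :=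
  {r | (∃ a : GenG n, r = .of a * .of a) ∨
    (∃ a b : GenG n, ({a.1.1, a.1.2, b.1.1, b.1.2} : Finset (Fin n)).card = 4 ∧
      r = .of a * .of b * (.of b * .of a)⁻¹) ∨
    (∃ i j k : Fin n, ∃ hij : i < j, ∃ hik : i < k, ∃ hjk : j < k,
      r = .of ⟨(i,j),hij⟩ * .of ⟨(i,k),hik⟩ * .of ⟨(j,k),hjk⟩ *
          (.of ⟨(j,k),hjk⟩ * .of ⟨(i,k),hik⟩ * .of ⟨(i,j),hij⟩)⁻¹)}

abbrev G2 (n : ℕ) := PresentedGroup (relsG n)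

abbrev GenD (n : ℕ) := GenG n ⊕ Fin n

def relsD (n : ℕ) : Set (FreeGroup (GenD n)) :=
  {r | (∃ a : GenG n, r = .of (.inl a) * .of (.inl a)) ∨
    (∃ a b : GenG n, ({a.1.1, a.1.2, b.1.1, b.1.2} : Finset (Fin n)).card = 4 ∧
      r = .of (.inl a) * .of (.inl b) * (.of (.inl b) * .of (.inl a))⁻¹) ∨
    (∃ i j k : Fin n, ∃ hij : i < j, ∃ hik : i < k, ∃ hjk : j < k,
      r = .of (.inl ⟨(i,j),hij⟩) * .of (.inl ⟨(i,k),hik⟩) * .of (.inl ⟨(j,k),hjk⟩) *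
          (.of (.inl ⟨(j,k),hjk⟩) * .of (.inl ⟨(i,k),hik⟩) * .of (.inl ⟨(i,j),hij⟩))⁻¹) ∨
    (∃ i : Fin n, r = .of (.inr i) * .of (.inr i)) ∨
    (∃ i j : Fin n, i ≠ j ∧ r = .of (.inr i) * .of (.inr j) * (.of (.inr j) * .of (.inr i))⁻¹) ∨
    (∃ i j : Fin n, ∃ h : i < j,
      r = .of (.inr i) * .of (.inr j) * .of (.inl ⟨(i,j),h⟩) * .of (.inr j) * .of (.inr i) *
          (.of (.inl ⟨(i,j),h⟩))⁻¹) ∨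
    (∃ a : GenG n, ∃ k : Fin n, k ≠ a.1.1 ∧ k ≠ a.1.2 ∧
      r = .of (.inl a) * .of (.inr k) * (.of (.inr k) * .of (.inl a))⁻¹)}

abbrev G2d (n : ℕ) := PresentedGroup (relsD n)

def embedGen (n : ℕ) (a : GenG n) : GenG (n+1) :=
  ⟨(a.1.1.castSucc, a.1.2.castSucc), Fin.castSucc_lt_castSucc_iff.mpr a.2⟩

def tauGen (n : ℕ) (i : Fin n) : GenG (n+1) := ⟨(i.castSucc, Fin.last n), Fin.castSucc_lt_last i⟩

def QRels (n : ℕ) : Set (G2 (n+1)) :=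
  {x | ∃ i j : Fin n, i ≠ j ∧
    x = PresentedGroup.of (tauGen n i) * PresentedGroup.of (tauGen n j) *
        (PresentedGroup.of (tauGen n j) * PresentedGroup.of (tauGen n i))⁻¹}

abbrev Qgrp (n : ℕ) := G2 (n+1) ⧸ Subgroup.normalClosure (QRels n)


namespace PO
variable {n : ℕ}

-- generator shorthands
abbrev A (a : GenG n) : G2d n := PresentedGroup.of (Sum.inl a)
abbrev T (i : Fin n) : G2d n := PresentedGroup.of (Sum.inr i)
abbrev B (g : GenG (n+1)) : G2 (n+1) := PresentedGroup.of g
abbrev mkQ : G2 (n+1) →* Qgrp n := QuotientGroup.mk' _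

-- relations in G2d
lemma dA_sq (a : GenG n) : A a * A a = 1 := by
  have := mk_rel_one (rels := relsD n) (Or.inl ⟨a, rfl⟩)
  simpa [map_mul, map_inv, mk_of] using this

lemma dT_sq (i : Fin n) : T i * T i = 1 := by
  have := mk_rel_one (rels := relsD n) (Or.inr (Or.inr (Or.inr (Or.inl ⟨i, rfl⟩))))
  simpa [map_mul, map_inv, mk_of] using this

lemma dT_comm {i j : Fin n} (h : i ≠ j) : T i * T j = T j * T i := by
  have := mk_rel_one (rels := relsD n) (Or.inr (Or.inr (Or.inr (Or.inr (Or.inl ⟨i, j, h, rfl⟩)))))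
  simp only [map_mul, map_inv, mk_of] at this
  exact mul_inv_eq_one.mp this

lemma dA_comm {a b : GenG n} (h : ({a.1.1, a.1.2, b.1.1, b.1.2} : Finset (Fin n)).card = 4) :
    A a * A b = A b * A a := by
  have := mk_rel_one (rels := relsD n) (Or.inr (Or.inl ⟨a, b, h, rfl⟩))
  simp only [map_mul, map_inv, mk_of] at this
  exact mul_inv_eq_one.mp this

lemma dAT_comm {a : GenG n} {k : Fin n} (h1 : k ≠ a.1.1) (h2 : k ≠ a.1.2) :
    A a * T k = T k * A a := by
  have := mk_rel_one (rels := relsD n)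
    (Or.inr (Or.inr (Or.inr (Or.inr (Or.inr (Or.inr ⟨a, k, h1, h2, rfl⟩))))))
  simp only [map_mul, map_inv, mk_of] at this
  exact mul_inv_eq_one.mp this

lemma dTriple {i j k : Fin n} (hij : i < j) (hik : i < k) (hjk : j < k) :
    A ⟨(i,j),hij⟩ * A ⟨(i,k),hik⟩ * A ⟨(j,k),hjk⟩ =
      A ⟨(j,k),hjk⟩ * A ⟨(i,k),hik⟩ * A ⟨(i,j),hij⟩ := by
  have := mk_rel_one (rels := relsD n)
    (Or.inr (Or.inr (Or.inl ⟨i, j, k, hij, hik, hjk, rfl⟩)))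
  simp only [map_mul, map_inv, mk_of] at this
  exact mul_inv_eq_one.mp this

lemma dRel6 {i j : Fin n} (h : i < j) :
    T i * T j * A ⟨(i,j),h⟩ * T j * T i = A ⟨(i,j),h⟩ := by
  have := mk_rel_one (rels := relsD n)
    (Or.inr (Or.inr (Or.inr (Or.inr (Or.inr (Or.inl ⟨i, j, h, rfl⟩))))))
  simp only [map_mul, map_inv, mk_of] at this
  exact mul_inv_eq_one.mp this

-- derived triple in G2d with taus
lemma dTriple' {i j : Fin n} (h : i < j) :
    A ⟨(i,j),h⟩ * T i * T j = T j * T i * A ⟨(i,j),h⟩ :=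
  triple_of_comm (comm_of_rel6 (dRel6 h) (dT_sq i) (dT_sq j)) (dT_comm h.ne)

-- relations in G2 (n+1)
lemma gB_sq (g : GenG (n+1)) : B (n := n) g * B g = 1 := by
  have := mk_rel_one (rels := relsG (n+1)) (Or.inl ⟨g, rfl⟩)
  simpa [map_mul, map_inv, mk_of] using this

lemma gB_comm {a b : GenG (n+1)}
    (h : ({a.1.1, a.1.2, b.1.1, b.1.2} : Finset (Fin (n+1))).card = 4) :
    B (n := n) a * B b = B b * B a := by
  have := mk_rel_one (rels := relsG (n+1)) (Or.inr (Or.inl ⟨a, b, h, rfl⟩))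
  simp only [map_mul, map_inv, mk_of] at this
  exact mul_inv_eq_one.mp this

lemma gTriple {i j k : Fin (n+1)} (hij : i < j) (hik : i < k) (hjk : j < k) :
    B (n := n) ⟨(i,j),hij⟩ * B ⟨(i,k),hik⟩ * B ⟨(j,k),hjk⟩ =
      B ⟨(j,k),hjk⟩ * B ⟨(i,k),hik⟩ * B ⟨(i,j),hij⟩ := by
  have := mk_rel_one (rels := relsG (n+1))
    (Or.inr (Or.inr ⟨i, j, k, hij, hik, hjk, rfl⟩))
  simp only [map_mul, map_inv, mk_of] at this
  exact mul_inv_eq_one.mp this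

-- relations in Qgrp
lemma qTau_comm {i j : Fin n} (h : i ≠ j) :
    mkQ (B (tauGen n i)) * mkQ (B (tauGen n j)) = mkQ (B (tauGen n j)) * mkQ (B (tauGen n i)) := by
  have hmem : B (tauGen n i) * B (tauGen n j) * (B (tauGen n j) * B (tauGen n i))⁻¹ ∈
      Subgroup.normalClosure (QRels n) :=
    Subgroup.subset_normalClosure ⟨i, j, h, rfl⟩
  have h1 : mkQ (B (tauGen n i) * B (tauGen n j) * (B (tauGen n j) * B (tauGen n i))⁻¹) = 1 :=
    (QuotientGroup.eq_one_iff _).mpr hmem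
  simp only [map_mul, map_inv] at h1
  exact mul_inv_eq_one.mp h1

-- generator classification in GenG (n+1)
lemma embed_fst (a : GenG n) : ((embedGen n a).1.1 : ℕ) = a.1.1 := rfl
lemma embed_snd (a : GenG n) : ((embedGen n a).1.2 : ℕ) = a.1.2 := rfl

lemma gen_eq_iff {g h : GenG (n+1)} :
    g = h ↔ ((g.1.1 : ℕ) = h.1.1 ∧ (g.1.2 : ℕ) = h.1.2) := by
  constructor
  · rintro rfl; exact ⟨rfl, rfl⟩
  · rintro ⟨h1, h2⟩
    apply Subtype.ext
    exact Prod.ext (Fin.ext h1) (Fin.ext h2)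

lemma gen_cases (g : GenG (n+1)) :
    (∃ a : GenG n, g = embedGen n a) ∨ (∃ i : Fin n, g = tauGen n i) := by
  have hlt : (g.1.1 : ℕ) < (g.1.2 : ℕ) := g.2
  by_cases h : (g.1.2 : ℕ) < n
  · left
    exact ⟨⟨(⟨g.1.1, hlt.trans h⟩, ⟨g.1.2, h⟩), Fin.mk_lt_mk.mpr hlt⟩,
      gen_eq_iff.mpr ⟨rfl, rfl⟩⟩
  · right
    have h2 : (g.1.2 : ℕ) = n := by have := g.1.2.isLt; omega
    exact ⟨⟨g.1.1, by omega⟩, gen_eq_iff.mpr ⟨rfl, by simp [tauGen, h2]⟩⟩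

-- the two generator maps
def fD (x : GenD n) : Qgrp n :=
  match x with
  | .inl a => mkQ (B (embedGen n a))
  | .inr i => mkQ (B (tauGen n i))

def fG (g : GenG (n+1)) : G2d n :=
  if h : (g.1.2 : ℕ) < n then
    A ⟨(⟨g.1.1, (Fin.lt_def.mp g.2).trans h⟩, ⟨g.1.2, h⟩), Fin.mk_lt_mk.mpr (Fin.lt_def.mp g.2)⟩
  else T ⟨g.1.1, by have := Fin.lt_def.mp g.2; have := g.1.2.isLt; omega⟩

lemma fG_embed (a : GenG n) : fG (embedGen n a) = A a := by
  have h : ((embedGen n a).1.2 : ℕ) < n := a.1.2.isLt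
  rw [fG, dif_pos h]
  congr 2

lemma fG_tau (i : Fin n) : fG (tauGen n i) = T i := by
  have h : ¬ ((tauGen n i).1.2 : ℕ) < n := by simp [tauGen]
  rw [fG, dif_neg h]
  congr 1

-- Q-level derived lemmas
lemma qSq (g : GenG (n+1)) : mkQ (B (n := n) g) * mkQ (B g) = 1 := by
  rw [← map_mul, gB_sq, map_one]

lemma qTriple {i j : Fin n} (h : i < j) :
    mkQ (B (embedGen n ⟨(i,j),h⟩)) * mkQ (B (tauGen n i)) * mkQ (B (tauGen n j)) =
      mkQ (B (tauGen n j)) * mkQ (B (tauGen n i)) * mkQ (B (embedGen n ⟨(i,j),h⟩)) := by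
  have hij : i.castSucc < j.castSucc := Fin.castSucc_lt_castSucc_iff.mpr h
  have hik : i.castSucc < Fin.last n := Fin.castSucc_lt_last i
  have hjk : j.castSucc < Fin.last n := Fin.castSucc_lt_last j
  have t := gTriple (n := n) hij hik hjk
  have e1 : (⟨(i.castSucc, j.castSucc), hij⟩ : GenG (n+1)) = embedGen n ⟨(i,j),h⟩ :=
    gen_eq_iff.mpr ⟨rfl, rfl⟩
  have e2 : (⟨(i.castSucc, Fin.last n), hik⟩ : GenG (n+1)) = tauGen n i := rfl
  have e3 : (⟨(j.castSucc, Fin.last n), hjk⟩ : GenG (n+1)) = tauGen n j := rfl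
  rw [e1, e2, e3] at t
  simpa only [map_mul] using congrArg mkQ t

lemma qRel6 {i j : Fin n} (h : i < j) :
    mkQ (B (tauGen n i)) * mkQ (B (tauGen n j)) * mkQ (B (embedGen n ⟨(i,j),h⟩)) *
      mkQ (B (tauGen n j)) * mkQ (B (tauGen n i)) = mkQ (B (embedGen n ⟨(i,j),h⟩)) :=
  rel6_of_comm (comm_of_triple (qTriple h) (qTau_comm h.ne))
    (qSq (tauGen n i)) (qSq (tauGen n j))

lemma hD : ∀ r ∈ relsD n, FreeGroup.lift fD r = 1 := by
  rintro r (⟨a, rfl⟩ | ⟨a, b, hc, rfl⟩ | ⟨i, j, k, hij, hik, hjk, rfl⟩ | ⟨i, rfl⟩ |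
    ⟨i, j, hij, rfl⟩ | ⟨i, j, h, rfl⟩ | ⟨a, k, h1, h2, rfl⟩) <;>
    simp only [map_mul, map_inv, FreeGroup.lift_apply_of, fD]
  · rw [← map_mul, gB_sq, map_one]
  · rw [mul_inv_eq_one]
    have hc' : ({(embedGen n a).1.1, (embedGen n a).1.2, (embedGen n b).1.1,
        (embedGen n b).1.2} : Finset (Fin (n+1))).card = 4 := by
      show ({a.1.1.castSucc, a.1.2.castSucc, b.1.1.castSucc, b.1.2.castSucc} :
        Finset (Fin (n+1))).card = 4
      rw [image4 (Fin.castSucc_injective n)]; exact hc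
    rw [← map_mul, ← map_mul]
    exact congrArg mkQ (gB_comm hc')
  · rw [mul_inv_eq_one]
    have hij' : i.castSucc < j.castSucc := Fin.castSucc_lt_castSucc_iff.mpr hij
    have hik' : i.castSucc < k.castSucc := Fin.castSucc_lt_castSucc_iff.mpr hik
    have hjk' : j.castSucc < k.castSucc := Fin.castSucc_lt_castSucc_iff.mpr hjk
    have t := gTriple (n := n) hij' hik' hjk'
    have e1 : (⟨(i.castSucc, j.castSucc), hij'⟩ : GenG (n+1)) = embedGen n ⟨(i,j),hij⟩ := rfl
    have e2 : (⟨(i.castSucc, k.castSucc), hik'⟩ : GenG (n+1)) = embedGen n ⟨(i,k),hik⟩ := rfl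
    have e3 : (⟨(j.castSucc, k.castSucc), hjk'⟩ : GenG (n+1)) = embedGen n ⟨(j,k),hjk⟩ := rfl
    rw [e1, e2, e3] at t
    simpa only [map_mul] using congrArg mkQ t
  · rw [← map_mul, gB_sq, map_one]
  · rw [mul_inv_eq_one]; exact qTau_comm hij
  · rw [mul_inv_eq_one]; exact qRel6 h
  · rw [mul_inv_eq_one, ← map_mul, ← map_mul]
    apply congrArg mkQ
    have hcard : ({(embedGen n a).1.1, (embedGen n a).1.2, (tauGen n k).1.1,
        (tauGen n k).1.2} : Finset (Fin (n+1))).card = 4 := by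
      show ({a.1.1.castSucc, a.1.2.castSucc, k.castSucc, Fin.last n} :
        Finset (Fin (n+1))).card = 4
      refine card4_iff.mpr ⟨?_, ?_, ?_, ?_, ?_, ?_⟩
      · exact fun he => a.2.ne (Fin.castSucc_injective n he)
      · exact fun he => h1 (Fin.castSucc_injective n he).symm
      · exact (Fin.castSucc_lt_last _).ne
      · exact fun he => h2 (Fin.castSucc_injective n he).symm
      · exact (Fin.castSucc_lt_last _).ne
      · exact (Fin.castSucc_lt_last _).ne
    exact gB_comm hcard

lemma hG : ∀ r ∈ relsG (n+1), FreeGroup.lift fG r = 1 := by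
  rintro r (⟨g, rfl⟩ | ⟨a, b, hc, rfl⟩ | ⟨i, j, k, hij, hik, hjk, rfl⟩) <;>
    simp only [map_mul, map_inv, FreeGroup.lift_apply_of]
  · rcases gen_cases g with ⟨a, rfl⟩ | ⟨i, rfl⟩
    · rw [fG_embed]; exact dA_sq a
    · rw [fG_tau]; exact dT_sq i
  · rw [mul_inv_eq_one]
    obtain ⟨d1, d2, d3, d4, d5, d6⟩ := card4_iff.mp hc
    rcases gen_cases a with ⟨a', rfl⟩ | ⟨i, rfl⟩ <;> rcases gen_cases b with ⟨b', rfl⟩ | ⟨j, rfl⟩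
    · rw [fG_embed, fG_embed]
      apply dA_comm
      have hc2 : ({a'.1.1.castSucc, a'.1.2.castSucc, b'.1.1.castSucc, b'.1.2.castSucc} :
          Finset (Fin (n+1))).card = 4 := hc
      rwa [image4 (Fin.castSucc_injective n)] at hc2
    · rw [fG_embed, fG_tau]
      apply dAT_comm
      · exact fun he => d2 (congrArg Fin.castSucc he).symm
      · exact fun he => d4 (congrArg Fin.castSucc he).symm
    · rw [fG_tau, fG_embed]
      exact (dAT_comm (fun he => d2 (congrArg Fin.castSucc he))
        (fun he => d3 (congrArg Fin.castSucc he))).symm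
    · exact absurd (rfl : (tauGen n i).1.2 = (tauGen n j).1.2) d5
  · rw [mul_inv_eq_one]
    by_cases hk : (k : ℕ) < n
    · have hjn : (j : ℕ) < n := (Fin.lt_def.mp hjk).trans hk
      have hin : (i : ℕ) < n := (Fin.lt_def.mp hij).trans hjn
      set i' : Fin n := ⟨i, hin⟩
      set j' : Fin n := ⟨j, hjn⟩
      set k' : Fin n := ⟨k, hk⟩
      have hij' : i' < j' := Fin.mk_lt_mk.mpr (Fin.lt_def.mp hij)
      have hik' : i' < k' := Fin.mk_lt_mk.mpr (Fin.lt_def.mp hik)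
      have hjk' : j' < k' := Fin.mk_lt_mk.mpr (Fin.lt_def.mp hjk)
      have e1 : (⟨(i,j),hij⟩ : GenG (n+1)) = embedGen n ⟨(i',j'),hij'⟩ :=
        gen_eq_iff.mpr ⟨rfl, rfl⟩
      have e2 : (⟨(i,k),hik⟩ : GenG (n+1)) = embedGen n ⟨(i',k'),hik'⟩ :=
        gen_eq_iff.mpr ⟨rfl, rfl⟩
      have e3 : (⟨(j,k),hjk⟩ : GenG (n+1)) = embedGen n ⟨(j',k'),hjk'⟩ :=
        gen_eq_iff.mpr ⟨rfl, rfl⟩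
      rw [e1, e2, e3, fG_embed, fG_embed, fG_embed]
      exact dTriple hij' hik' hjk'
    · have hkn : (k : ℕ) = n := by have := k.isLt; omega
      have hjn : (j : ℕ) < n := by have := Fin.lt_def.mp hjk; omega
      have hin : (i : ℕ) < n := (Fin.lt_def.mp hij).trans hjn
      set i' : Fin n := ⟨i, hin⟩
      set j' : Fin n := ⟨j, hjn⟩
      have hij' : i' < j' := Fin.mk_lt_mk.mpr (Fin.lt_def.mp hij)
      have e1 : (⟨(i,j),hij⟩ : GenG (n+1)) = embedGen n ⟨(i',j'),hij'⟩ :=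
        gen_eq_iff.mpr ⟨rfl, rfl⟩
      have e2 : (⟨(i,k),hik⟩ : GenG (n+1)) = tauGen n i' :=
        gen_eq_iff.mpr ⟨rfl, by simp [tauGen, hkn]⟩
      have e3 : (⟨(j,k),hjk⟩ : GenG (n+1)) = tauGen n j' :=
        gen_eq_iff.mpr ⟨rfl, by simp [tauGen, hkn]⟩
      rw [e1, e2, e3, fG_embed, fG_tau, fG_tau]
      exact dTriple' hij'

def phiHom (n : ℕ) : G2d n →* Qgrp n := PresentedGroup.toGroup hD

def liftG (n : ℕ) : G2 (n+1) →* G2d n := PresentedGroup.toGroup hG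

lemma liftG_ker : ∀ x ∈ Subgroup.normalClosure (QRels n), liftG n x = 1 := by
  intro x hx
  refine Subgroup.normalClosure_le_normal (N := (liftG n).ker) ?_ hx
  rintro y ⟨i, j, hij, rfl⟩
  show liftG n _ = 1
  simp only [map_mul, map_inv]
  have h1 : liftG n (B (tauGen n i)) = T i := by
    rw [show liftG n (B (tauGen n i)) = fG (tauGen n i) from PresentedGroup.toGroup.of hG,
      fG_tau]
  have h2 : liftG n (B (tauGen n j)) = T j := by
    rw [show liftG n (B (tauGen n j)) = fG (tauGen n j) from PresentedGroup.toGroup.of hG,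
      fG_tau]
  rw [h1, h2, mul_inv_eq_one]
  exact dT_comm hij

def omgHom (n : ℕ) : Qgrp n →* G2d n := QuotientGroup.lift _ (liftG n) liftG_ker

lemma omg_mkQ (x : G2 (n+1)) : omgHom n (mkQ x) = liftG n x := rfl

lemma phi_inl (a : GenG n) : phiHom n (PresentedGroup.of (Sum.inl a)) = mkQ (B (embedGen n a)) :=
  PresentedGroup.toGroup.of hD

lemma phi_inr (i : Fin n) : phiHom n (PresentedGroup.of (Sum.inr i)) = mkQ (B (tauGen n i)) :=
  PresentedGroup.toGroup.of hD

lemma comp1 : (omgHom n).comp (phiHom n) = MonoidHom.id (G2d n) := by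
  apply PresentedGroup.ext
  rintro (a | i) <;> simp only [MonoidHom.comp_apply, MonoidHom.id_apply]
  · rw [phi_inl, omg_mkQ, show liftG n (B (embedGen n a)) = fG (embedGen n a) from
      PresentedGroup.toGroup.of hG, fG_embed]
  · rw [phi_inr, omg_mkQ, show liftG n (B (tauGen n i)) = fG (tauGen n i) from
      PresentedGroup.toGroup.of hG, fG_tau]

lemma comp2 : (phiHom n).comp (omgHom n) = MonoidHom.id (Qgrp n) := by
  apply QuotientGroup.monoidHom_ext
  apply PresentedGroup.ext
  intro g
  simp only [MonoidHom.comp_apply, MonoidHom.id_apply]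
  have : omgHom n (mkQ (B g)) = fG g := PresentedGroup.toGroup.of hG
  show phiHom n (omgHom n (mkQ (B g))) = mkQ (B g)
  rw [this]
  rcases gen_cases g with ⟨a, rfl⟩ | ⟨i, rfl⟩
  · rw [fG_embed]; exact phi_inl a
  · rw [fG_tau]; exact phi_inr i

def equiv (n : ℕ) : G2d n ≃* Qgrp n :=
  MonoidHom.toMulEquiv (phiHom n) (omgHom n) comp1 comp2

lemma equiv_symm_apply (x : Qgrp n) : (equiv n).symm x = omgHom n x := rfl

end PO

theorem psi_omega_iso (n : ℕ) :
    ∃ e : G2d n ≃* Qgrp n,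
      (∀ a : GenG n, e (PresentedGroup.of (Sum.inl a)) =
        QuotientGroup.mk (PresentedGroup.of (embedGen n a))) ∧
      (∀ i : Fin n, e (PresentedGroup.of (Sum.inr i)) =
        QuotientGroup.mk (PresentedGroup.of (tauGen n i))) ∧
      (∀ a : GenG n, e.symm (QuotientGroup.mk (PresentedGroup.of (embedGen n a))) =
        PresentedGroup.of (Sum.inl a)) ∧
      (∀ i : Fin n, e.symm (QuotientGroup.mk (PresentedGroup.of (tauGen n i))) =
        PresentedGroup.of (Sum.inr i)) := by
  refine ⟨PO.equiv n, fun a => ?_, fun i => ?_, fun a => ?_, fun i => ?_⟩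
  · exact PO.phi_inl a
  · exact PO.phi_inr i
  · show PO.liftG n (PresentedGroup.of (embedGen n a)) = _
    rw [show PO.liftG n (PO.B (embedGen n a)) = PO.fG (embedGen n a) from
        PresentedGroup.toGroup.of PO.hG, PO.fG_embed]
  · show PO.liftG n (PresentedGroup.of (tauGen n i)) = _
    rw [show PO.liftG n (PO.B (tauGen n i)) = PO.fG (tauGen n i) from
        PresentedGroup.toGroup.of PO.hG, PO.fG_tau]
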